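/- Let $R$ be a commutative ring and let $x_{ia}, y_{ia}, z_{ia} \in R$ for $i \in \{1,2,3\}$, $a \in \{1,2,3\}$. Substituting $z_{ia} = x_{ia} - y_{ia}$ into the polynomial $f = \det\begin{pmatrix} z_{11} & z_{12} & z_{13} \\ x_{21} & x_{22} & x_{23} \\ x_{31} & x_{32} & x_{33} \end{pmatrix} + \det\begin{pmatrix} y_{11} & y_{12} & y_{13} \\ z_{21} & z_{22} & z_{23} \\ x_{31} & x_{32} & x_{33} \end{pmatrix}$, the resulting element lies in the ideal of $R$ generated by $\det(X)$ (the determinant of the matrix $(x_{ia})$) and the $2 \times 2$ minors of the matrix $(y_{ia})$ with rows $1,2$. -/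
import Mathlib

/-- The special case `m = n = 3`, `s₁ = 3`, `s₂ = 2`: substituting
`z_{ia} = x_{ia} - y_{ia}` into
`f = det(z₁;x₂;x₃) + det(y₁;z₂;x₃)` yields an element of the ideal
generated by `det X` and the 2×2 minors of the first two rows of `Y`. -/
theorem stmt_10 {R : Type*} [CommRing R] (x y : Fin 3 → Fin 3 → R) :
    (Matrix.of ![![x 0 0 - y 0 0, x 0 1 - y 0 1, x 0 2 - y 0 2],
                 ![x 1 0, x 1 1, x 1 2],
                 ![x 2 0, x 2 1, x 2 2]]).det
    + (Matrix.of ![![y 0 0, y 0 1, y 0 2],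
                   ![x 1 0 - y 1 0, x 1 1 - y 1 1, x 1 2 - y 1 2],
                   ![x 2 0, x 2 1, x 2 2]]).det
    ∈ Ideal.span ({(Matrix.of x).det,
        y 0 0 * y 1 1 - y 0 1 * y 1 0,
        y 0 0 * y 1 2 - y 0 2 * y 1 0,
        y 0 1 * y 1 2 - y 0 2 * y 1 1} : Set R) := by
  have h : (Matrix.of ![![x 0 0 - y 0 0, x 0 1 - y 0 1, x 0 2 - y 0 2],
                 ![x 1 0, x 1 1, x 1 2],
                 ![x 2 0, x 2 1, x 2 2]]).det
    + (Matrix.of ![![y 0 0, y 0 1, y 0 2],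
                   ![x 1 0 - y 1 0, x 1 1 - y 1 1, x 1 2 - y 1 2],
                   ![x 2 0, x 2 1, x 2 2]]).det
    = (Matrix.of x).det * 1
      + (y 0 0 * y 1 1 - y 0 1 * y 1 0) * (-(x 2 2))
      + (y 0 0 * y 1 2 - y 0 2 * y 1 0) * (x 2 1)
      + (y 0 1 * y 1 2 - y 0 2 * y 1 1) * (-(x 2 0)) := by
    simp [Matrix.det_fin_three]; ring
  rw [h]
  refine add_mem (add_mem (add_mem ?_ ?_) ?_) ?_ <;>
    exact Ideal.mul_mem_right _ _ (Ideal.subset_span (by simp))
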